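/- Good fundamental domain leads to ping-pong: let Γ = ⟨γ₁,…,γ_g⟩ with good fundamental domain F = P¹ \ (B₁∪…∪B_g∪B₁'∪…∪B_g'). If γ has reduced word h₁h₂⋯h_k (k ≥ 1) and b ∈ P¹ satisfies b ∉ B_j' when h_k = γ_j and b ∉ B_j when h_k = γ_j⁻¹, then γb ∈ B_i⁺ if h₁ = γ_i and γb ∈ B_i'⁺ if h₁ = γ_i⁻¹. -/

import Mathlib

open Pointwise

/-- Ping-pong from a good fundamental domain (Lemma 2.4): let `Γ = ⟨γ₁,…,γ_g⟩`
act on `P¹` with good fundamental domain `P¹ \ (B₁ ∪ … ∪ B_g ∪ B₁' ∪ … ∪ B_g')`,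
so that the closed balls `B_i⁺, B_i'⁺` are pairwise disjoint,
`γ_i(P¹ \ B_i') = B_i⁺` and `γ_i⁻¹(P¹ \ B_i) = B_i'⁺`.  If `γ = h₁h₂⋯h_k` is a
nonempty reduced word and `b` avoids `B_j'` when `h_k = γ_j` (resp. `B_j` when
`h_k = γ_j⁻¹`), then `γ·b ∈ B_i⁺` if `h₁ = γ_i` and `γ·b ∈ B_i'⁺` if `h₁ = γ_i⁻¹`. -/
theorem ping_pong_good_fundamental_domain {X : Type*} {G : Type*} [Group G] [MulAction G X]
    {g : ℕ} (γ : Fin g → G) (B B' Bp B'p : Fin g → Set X)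
    (hBsub : ∀ i, B i ⊆ Bp i) (hB'sub : ∀ i, B' i ⊆ B'p i)
    (hdisj1 : ∀ i j, i ≠ j → Disjoint (Bp i) (Bp j))
    (hdisj2 : ∀ i j, i ≠ j → Disjoint (B'p i) (B'p j))
    (hdisj3 : ∀ i j, Disjoint (Bp i) (B'p j))
    (hmap : ∀ i, γ i • (B' i)ᶜ = Bp i)
    (hmap' : ∀ i, (γ i)⁻¹ • (B i)ᶜ = B'p i)
    {k : ℕ} (hk : 1 ≤ k) (idx : Fin k → Fin g) (sgn : Fin k → Bool)
    (hred : ∀ (j : ℕ) (hj : j + 1 < k),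
      idx ⟨j, by omega⟩ = idx ⟨j + 1, hj⟩ → sgn ⟨j, by omega⟩ = sgn ⟨j + 1, hj⟩)
    (b : X)
    (hb : if sgn ⟨k - 1, by omega⟩ then b ∉ B' (idx ⟨k - 1, by omega⟩)
          else b ∉ B (idx ⟨k - 1, by omega⟩)) :
    (if sgn ⟨0, by omega⟩ then
        ((List.ofFn fun j : Fin k => if sgn j then γ (idx j) else (γ (idx j))⁻¹).prod • b
          ∈ Bp (idx ⟨0, by omega⟩))
      else
        ((List.ofFn fun j : Fin k => if sgn j then γ (idx j) else (γ (idx j))⁻¹).prod • b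
          ∈ B'p (idx ⟨0, by omega⟩))) := by
  have key : ∀ i (x : X), x ∉ B' i → γ i • x ∈ Bp i := fun i x hx => by
    rw [← hmap i]; exact Set.smul_mem_smul_set hx
  have key' : ∀ i (x : X), x ∉ B i → (γ i)⁻¹ • x ∈ B'p i := fun i x hx => by
    rw [← hmap' i]; exact Set.smul_mem_smul_set hx
  revert hk
  induction k generalizing b with
  | zero => omega
  | succ n ih =>
    intro hk hb
    simp only [Nat.add_sub_cancel] at hb
    rw [List.ofFn_succ]
    simp only [List.prod_cons, mul_smul]
    rcases Nat.eq_zero_or_pos n with hn | hn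
    · subst hn
      simp only [List.ofFn_zero, List.prod_nil, one_smul, Fin.mk_zero] at hb ⊢
      by_cases hs : sgn 0 = true
      · rw [if_pos hs] at hb ⊢
        rw [if_pos hs]
        exact key _ _ hb
      · rw [if_neg hs] at hb ⊢
        rw [if_neg hs]
        exact key' _ _ hb
    · have hb2 : (if sgn ((⟨n - 1, by omega⟩ : Fin n).succ) = true
          then b ∉ B' (idx ((⟨n - 1, by omega⟩ : Fin n).succ))
          else b ∉ B (idx ((⟨n - 1, by omega⟩ : Fin n).succ))) := by
        have e : ((⟨n - 1, by omega⟩ : Fin n).succ : Fin (n + 1)) = ⟨n, by omega⟩ := by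
          ext
          simp [Nat.sub_add_cancel hn]
        rw [e]; exact hb
      have ihh : (if sgn ⟨1, by omega⟩ = true
          then (List.ofFn fun i : Fin n =>
            if sgn i.succ = true then γ (idx i.succ) else (γ (idx i.succ))⁻¹).prod • b
            ∈ Bp (idx ⟨1, by omega⟩)
          else (List.ofFn fun i : Fin n =>
            if sgn i.succ = true then γ (idx i.succ) else (γ (idx i.succ))⁻¹).prod • b
            ∈ B'p (idx ⟨1, by omega⟩)) :=
        ih (fun j => idx j.succ) (fun j => sgn j.succ)
          (fun j hj h => hred (j + 1) (by omega) h) b hn hb2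
      have hr := hred 0 (by omega)
      simp only [Fin.mk_zero, Nat.zero_add] at hr ⊢
      by_cases hs0 : sgn 0 = true <;> by_cases hs1 : sgn ⟨1, Nat.succ_lt_succ hn⟩ = true
      · rw [if_pos hs1] at ihh
        simp only [hs0, ↓reduceIte]
        refine key _ _ fun hmem => ?_
        exact Set.disjoint_left.mp (hdisj3 (idx ⟨1, Nat.succ_lt_succ hn⟩) (idx 0)) ihh (hB'sub _ hmem)
      · rw [if_neg hs1] at ihh
        simp only [hs0, ↓reduceIte]
        refine key _ _ fun hmem => ?_
        have hne : idx ⟨1, Nat.succ_lt_succ hn⟩ ≠ idx 0 := fun h => hs1 (by rw [← hr h.symm]; exact hs0)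
        exact Set.disjoint_left.mp (hdisj2 _ _ hne) ihh (hB'sub _ hmem)
      · rw [if_pos hs1] at ihh
        simp only [hs0, ↓reduceIte]
        refine key' _ _ fun hmem => ?_
        have hne : idx ⟨1, Nat.succ_lt_succ hn⟩ ≠ idx 0 := fun h => hs0 (by rw [hr h.symm]; exact hs1)
        exact Set.disjoint_left.mp (hdisj1 _ _ hne) ihh (hBsub _ hmem)
      · rw [if_neg hs1] at ihh
        simp only [hs0, ↓reduceIte]
        refine key' _ _ fun hmem => ?_
        exact Set.disjoint_left.mp (hdisj3 (idx 0) (idx ⟨1, Nat.succ_lt_succ hn⟩)) (hBsub _ hmem) ihh
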